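/- arXiv:2104.09369 — 4 statements merged into one kernel-verified Lean document; each statement's English description precedes it below -/
import Mathlib

section
/- Fix N, S ≥ 1 and L ≥ 1. Let Â ∈ ℝ^{N×N} have nonnegative entries and let W^{(0)}, …, W^{(L−1)} be real weight matrices of compatible sizes with W^{(0)} having S rows. For an input X ∈ ℝ^{N×S} define hidden states H^{(0)} = X and H^{(l+1)} = ReLU(Â H^{(l)} W^{(l)}) entrywise, and for a perturbed input X' = X + U define H'^{(l)} analogously with H'^{(0)} = X'. Then for every l with 1 ≤ l ≤ L, entrywise |H'^{(l)} − H^{(l)}| ≤ Â^l · |U| · |W^{(0)}| · |W^{(1)}| ⋯ |W^{(l−1)}|. -/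
/-- The ReLU function `x ↦ max x 0`. -/
def relu (x : ℝ) : ℝ := max x 0

/-- Inductive multi-layer diffusion bound for a GCN.  With hidden states
`H⁰ = X`, `H^{l+1} = ReLU(Â H^l W^l)` and perturbed hidden states starting from
`X' = X + U`, and with `WP l = |W⁰| ⋯ |W^{l-1}|` the product of the entrywise
absolute values of the weight matrices, one has for every `1 ≤ l ≤ L` the
entrywise bound `|H'^l − H^l| ≤ Â^l |U| (WP l)`. -/
theorem entrywise_abs_hidden_state_diff_le
    (N L : ℕ) (hN : 1 ≤ N) (hL : 1 ≤ L)
    (dims : ℕ → ℕ) (S : ℕ) (hS : dims 0 = S) (hS1 : 1 ≤ S)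
    (Ahat : Matrix (Fin N) (Fin N) ℝ) (hA : ∀ i j, 0 ≤ Ahat i j)
    (W : (l : ℕ) → Matrix (Fin (dims l)) (Fin (dims (l + 1))) ℝ)
    (X U : Matrix (Fin N) (Fin (dims 0)) ℝ)
    (H H' : (l : ℕ) → Matrix (Fin N) (Fin (dims l)) ℝ)
    (hH0 : H 0 = X) (hH'0 : H' 0 = X + U)
    (hHrec : ∀ l, H (l + 1) = (Ahat * H l * W l).map relu)
    (hH'rec : ∀ l, H' (l + 1) = (Ahat * H' l * W l).map relu)
    (WP : (l : ℕ) → Matrix (Fin (dims 0)) (Fin (dims l)) ℝ)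
    (hWP0 : WP 0 = 1)
    (hWPrec : ∀ l, WP (l + 1) = WP l * (W l).map (fun x => |x|)) :
    ∀ l, 1 ≤ l → l ≤ L → ∀ i j,
      |H' l i j - H l i j| ≤ (Ahat ^ l * (U.map (fun x => |x|)) * WP l) i j := by

  suffices h : ∀ l, ∀ i j, |H' l i j - H l i j| ≤ (Ahat ^ l * (U.map (fun x => |x|)) * WP l) i j by
    intro l _ _ i j; exact h l i j
  intro l
  induction l with
  | zero =>
    intro i j
    simp [hH0, hH'0, hWP0, Matrix.add_apply, Matrix.map_apply]
  | succ l ih =>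
    intro i j
    have hABD : ∀ i m, |(Ahat * (H' l - H l)) i m| ≤
        (Ahat * (Ahat ^ l * (U.map (fun x => |x|)) * WP l)) i m := by
      intro i m
      rw [Matrix.mul_apply, Matrix.mul_apply]
      refine (Finset.abs_sum_le_sum_abs _ _).trans (Finset.sum_le_sum fun k _ => ?_)
      rw [abs_mul, abs_of_nonneg (hA i k)]
      refine mul_le_mul_of_nonneg_left ?_ (hA i k)
      rw [Matrix.sub_apply]
      exact ih k m
    have hM : Ahat ^ (l + 1) * (U.map (fun x => |x|)) * WP (l + 1) =
        Ahat * (Ahat ^ l * (U.map (fun x => |x|)) * WP l) * (W l).map (fun x => |x|) := by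
      rw [hWPrec, pow_succ']
      simp [Matrix.mul_assoc]
    rw [hHrec, hH'rec, hM]
    simp only [Matrix.map_apply]
    calc |relu ((Ahat * H' l * W l) i j) - relu ((Ahat * H l * W l) i j)|
        ≤ |(Ahat * H' l * W l) i j - (Ahat * H l * W l) i j| :=
          abs_max_sub_max_le_abs _ _ 0
      _ = |(Ahat * (H' l - H l) * W l) i j| := by
          rw [Matrix.mul_sub, Matrix.sub_mul, Matrix.sub_apply]
      _ ≤ _ := by
          rw [Matrix.mul_apply, Matrix.mul_apply]
          refine (Finset.abs_sum_le_sum_abs _ _).trans (Finset.sum_le_sum fun m _ => ?_)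
          rw [abs_mul, Matrix.map_apply]
          exact mul_le_mul_of_nonneg_right (hABD i m) (abs_nonneg _)
end

section
/- Fix N, S ≥ 1 and L ≥ 1. Let Â ∈ ℝ^{N×N} have nonnegative entries, let W^{(0)}, …, W^{(L−1)} be real weight matrices of compatible sizes with W^{(0)} having S rows, and suppose ‖W^{(l)}‖_F² ≤ W for every l, where W ≥ 0. Let g : ℝ^{d} → ℝ^{T} (with d the number of columns of W^{(L−1)}) satisfy ‖g(u) − g(v)‖₂² ≤ M ‖u − v‖₂² for all u, v and some constant M ≥ 0. Define the L-layer GCN f by: H^{(0)} = X ∈ ℝ^{N×S}, H^{(l+1)} = ReLU(Â H^{(l)} W^{(l)}) entrywise for 0 ≤ l ≤ L−2, and f(X)_{i·} = g((Â H^{(L−1)} W^{(L−1)})_{i·}) for each node i. Then for every perturbation U ∈ ℝ^{N×S} and every node i, the attack influence φ_i(U) = ‖f(X+U)_{i·} − f(X)_{i·}‖₂² satisfies φ_i(U) ≤ M · W^L · ‖(Â^L |U|)_{i·}‖₂², where |U| is the entrywise absolute value of U and (Â^L |U|)_{i·} is the i-th row of the matrix product Â^L · |U|. -/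
open scoped BigOperators

lemma relu_lipschitz (a b : ℝ) : |relu a - relu b| ≤ |a - b| :=
  abs_max_sub_max_le_abs a b 0

/-- Frobenius submultiplicativity for squared Frobenius norms. -/
lemma frob_mul_le {a b c : ℕ} (P : Matrix (Fin a) (Fin b) ℝ) (Q : Matrix (Fin b) (Fin c) ℝ) :
    ∑ s, ∑ k, ((P * Q) s k) ^ 2 ≤ (∑ s, ∑ m, (P s m) ^ 2) * (∑ m, ∑ k, (Q m k) ^ 2) := by
  have h1 : ∀ s k, ((P * Q) s k) ^ 2 ≤ (∑ m, (P s m) ^ 2) * (∑ m, (Q m k) ^ 2) := by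
    intro s k
    rw [Matrix.mul_apply]
    exact Finset.sum_mul_sq_le_sq_mul_sq _ _ _
  calc ∑ s, ∑ k, ((P * Q) s k) ^ 2
      ≤ ∑ s, ∑ k, (∑ m, (P s m) ^ 2) * (∑ m, (Q m k) ^ 2) := by
        refine Finset.sum_le_sum fun s _ => Finset.sum_le_sum fun k _ => h1 s k
    _ = (∑ s, ∑ m, (P s m) ^ 2) * (∑ m, ∑ k, (Q m k) ^ 2) := by
        rw [Finset.sum_mul]
        refine Finset.sum_congr rfl fun s _ => ?_
        rw [← Finset.mul_sum, Finset.sum_comm (s := Finset.univ) (t := Finset.univ)]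

/-- Quantitative diffusion-attack bound (Proposition 1 of the paper).
For an `L`-layer GCN `f` (here `L = L' + 1 ≥ 1`) with nonnegative propagation
matrix `Â`, weight matrices satisfying `‖W^(l)‖_F² ≤ Wc`, and an
`M`-Lipschitz-squared readout `g` (`‖g u − g v‖₂² ≤ M ‖u − v‖₂²`), the attack
influence `φᵢ(U) = ‖f(X+U)ᵢ − f(X)ᵢ‖₂²` satisfies
`φᵢ(U) ≤ M ⬝ Wc^L ⬝ ‖(Â^L |U|)ᵢ‖₂²`. -/
theorem attack_influence_le
    (N L' T : ℕ) (hN : 1 ≤ N)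
    (L : ℕ) (hLdef : L = L' + 1)
    (dims : ℕ → ℕ) (S : ℕ) (hS : dims 0 = S) (hS1 : 1 ≤ S)
    (Ahat : Matrix (Fin N) (Fin N) ℝ) (hA : ∀ i j, 0 ≤ Ahat i j)
    (W : (l : ℕ) → Matrix (Fin (dims l)) (Fin (dims (l + 1))) ℝ)
    (Wc : ℝ) (hWc : 0 ≤ Wc)
    (hW : ∀ l, l < L → ∑ j, ∑ k, (W l j k) ^ 2 ≤ Wc)
    (M : ℝ) (hM : 0 ≤ M)
    (g : (Fin (dims (L' + 1)) → ℝ) → (Fin T → ℝ))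
    (hg : ∀ u v, ∑ t, (g u t - g v t) ^ 2 ≤ M * ∑ j, (u j - v j) ^ 2)
    (X U : Matrix (Fin N) (Fin (dims 0)) ℝ)
    (H H' : (l : ℕ) → Matrix (Fin N) (Fin (dims l)) ℝ)
    (hH0 : H 0 = X) (hH'0 : H' 0 = X + U)
    (hHrec : ∀ l, l + 2 ≤ L → H (l + 1) = (Ahat * H l * W l).map relu)
    (hH'rec : ∀ l, l + 2 ≤ L → H' (l + 1) = (Ahat * H' l * W l).map relu)
    (i : Fin N) :
    ∑ t, (g ((Ahat * H' L' * W L') i) t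
            - g ((Ahat * H L' * W L') i) t) ^ 2
      ≤ M * Wc ^ L * ∑ k, ((Ahat ^ L * (U.map (fun x => |x|))) i k) ^ 2 := by
  subst hLdef
  set Ua : Matrix (Fin N) (Fin (dims 0)) ℝ := U.map (fun x => |x|) with hUa
  -- entrywise bound lemma: |A (H'-H) W|_{jm} ≤ (A^{l+1} Ua R)_{jm}
  have step : ∀ (l : ℕ) (R : Matrix (Fin (dims 0)) (Fin (dims l)) ℝ)
      (D : Matrix (Fin N) (Fin (dims l)) ℝ),
      (∀ j m, |D j m| ≤ (Ahat ^ l * Ua * R) j m) →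
      ∀ j m, |(Ahat * D * W l) j m|
        ≤ (Ahat ^ (l + 1) * Ua * (R * (W l).map (fun x => |x|))) j m := by
    intro l R D hD j m
    have hrw : Ahat ^ (l + 1) * Ua * (R * (W l).map (fun x => |x|))
        = Ahat * (Ahat ^ l * Ua * R) * (W l).map (fun x => |x|) := by
      rw [pow_succ' Ahat l]
      simp only [Matrix.mul_assoc]
    rw [hrw]
    calc |(Ahat * D * W l) j m|
        = |∑ m', (∑ j', Ahat j j' * D j' m') * W l m' m| := by
          simp [Matrix.mul_apply]
      _ ≤ ∑ m', |(∑ j', Ahat j j' * D j' m') * W l m' m| := Finset.abs_sum_le_sum_abs _ _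
      _ ≤ ∑ m', (∑ j', Ahat j j' * (Ahat ^ l * Ua * R) j' m') * |W l m' m| := by
          refine Finset.sum_le_sum fun m' _ => ?_
          rw [abs_mul]
          refine mul_le_mul_of_nonneg_right ?_ (abs_nonneg _)
          calc |∑ j', Ahat j j' * D j' m'|
              ≤ ∑ j', |Ahat j j' * D j' m'| := Finset.abs_sum_le_sum_abs _ _
            _ ≤ ∑ j', Ahat j j' * (Ahat ^ l * Ua * R) j' m' := by
                refine Finset.sum_le_sum fun j' _ => ?_
                rw [abs_mul, abs_of_nonneg (hA j j')]
                exact mul_le_mul_of_nonneg_left (hD j' m') (hA j j')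
      _ = (Ahat * (Ahat ^ l * Ua * R) * (W l).map (fun x => |x|)) j m := by
          simp [Matrix.mul_apply, Matrix.map_apply, Finset.sum_mul]
  -- main induction
  have key : ∀ l, l ≤ L' → ∃ R : Matrix (Fin (dims 0)) (Fin (dims (l + 1))) ℝ,
      (∑ s, ∑ k, (R s k) ^ 2 ≤ Wc ^ (l + 1)) ∧
      (∀ j m, |(Ahat * (H' l - H l) * W l) j m| ≤ (Ahat ^ (l + 1) * Ua * R) j m) := by
    intro l hl
    induction l with
    | zero =>
      refine ⟨(W 0).map (fun x => |x|), ?_, ?_⟩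
      · have := hW 0 (by omega)
        simpa [pow_one, Matrix.map_apply, sq_abs] using this
      · have hD : ∀ j m, |(H' 0 - H 0) j m| ≤ ((Ahat ^ 0 * Ua * (1 : Matrix (Fin (dims 0)) (Fin (dims 0)) ℝ) : Matrix (Fin N) (Fin (dims 0)) ℝ)) j m := by
          intro j m
          simp [hH0, hH'0, hUa, Matrix.map_apply, Matrix.mul_one, pow_zero, Matrix.one_mul]
        have := step 0 1 (H' 0 - H 0) hD
        simpa using this
    | succ l ih =>
      obtain ⟨R, hRnorm, hRbound⟩ := ih (by omega)
      have hrec : H (l + 1) = (Ahat * H l * W l).map relu := hHrec l (by omega)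
      have hrec' : H' (l + 1) = (Ahat * H' l * W l).map relu := hH'rec l (by omega)
      have hD : ∀ j m, |(H' (l + 1) - H (l + 1)) j m| ≤ (Ahat ^ (l + 1) * Ua * R) j m := by
        intro j m
        rw [Matrix.sub_apply, hrec, hrec']
        refine le_trans (relu_lipschitz _ _) ?_
        have : (Ahat * H' l * W l) j m - (Ahat * H l * W l) j m
            = (Ahat * (H' l - H l) * W l) j m := by
          simp [Matrix.mul_sub, Matrix.sub_mul, Matrix.sub_apply]
        rw [this]
        exact hRbound j m
      refine ⟨R * (W (l + 1)).map (fun x => |x|), ?_, step (l + 1) R _ hD⟩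
      calc ∑ s, ∑ k, ((R * (W (l + 1)).map (fun x => |x|)) s k) ^ 2
          ≤ (∑ s, ∑ m, (R s m) ^ 2) * (∑ m, ∑ k, (((W (l + 1)).map (fun x => |x|)) m k) ^ 2) :=
            frob_mul_le _ _
        _ ≤ Wc ^ (l + 1) * Wc := by
            refine mul_le_mul hRnorm ?_ ?_ (pow_nonneg hWc _)
            · have := hW (l + 1) (by omega)
              simpa [Matrix.map_apply, sq_abs] using this
            · positivity
        _ = Wc ^ (l + 1 + 1) := by ring
  obtain ⟨R, hRnorm, hRbound⟩ := key L' le_rfl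
  set B : Matrix (Fin N) (Fin (dims 0)) ℝ := Ahat ^ (L' + 1) * Ua with hB
  -- final chain
  have h1 : ∑ t, (g ((Ahat * H' L' * W L') i) t - g ((Ahat * H L' * W L') i) t) ^ 2
      ≤ M * ∑ k, ((Ahat * H' L' * W L') i k - (Ahat * H L' * W L') i k) ^ 2 := hg _ _
  have h2 : ∑ k, ((Ahat * H' L' * W L') i k - (Ahat * H L' * W L') i k) ^ 2
      ≤ ∑ k, ((B * R) i k) ^ 2 := by
    refine Finset.sum_le_sum fun k _ => ?_
    have hd : (Ahat * H' L' * W L') i k - (Ahat * H L' * W L') i k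
        = (Ahat * (H' L' - H L') * W L') i k := by
      simp [Matrix.mul_sub, Matrix.sub_mul, Matrix.sub_apply]
    rw [hd, ← sq_abs]
    have hb := hRbound i k
    have hb2 : (Ahat ^ (L' + 1) * Ua * R) i k = (B * R) i k := by rw [hB]
    rw [hb2] at hb
    exact pow_le_pow_left₀ (abs_nonneg _) hb 2
  have h3 : ∑ k, ((B * R) i k) ^ 2 ≤ (∑ s, ∑ k, (R s k) ^ 2) * ∑ s, (B i s) ^ 2 := by
    calc ∑ k, ((B * R) i k) ^ 2
        ≤ ∑ k, (∑ s, (B i s) ^ 2) * (∑ s, (R s k) ^ 2) := by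
          refine Finset.sum_le_sum fun k _ => ?_
          rw [Matrix.mul_apply]
          exact Finset.sum_mul_sq_le_sq_mul_sq _ _ _
      _ = (∑ s, ∑ k, (R s k) ^ 2) * ∑ s, (B i s) ^ 2 := by
          rw [← Finset.mul_sum, Finset.sum_comm (s := Finset.univ) (t := Finset.univ)
            (f := fun s k => (R s k) ^ 2)]
          ring
  have hBsum : 0 ≤ ∑ s, (B i s) ^ 2 := Finset.sum_nonneg fun _ _ => sq_nonneg _
  calc ∑ t, (g ((Ahat * H' L' * W L') i) t - g ((Ahat * H L' * W L') i) t) ^ 2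
      ≤ M * ∑ k, ((B * R) i k) ^ 2 := h1.trans (mul_le_mul_of_nonneg_left h2 hM)
    _ ≤ M * ((∑ s, ∑ k, (R s k) ^ 2) * ∑ s, (B i s) ^ 2) := mul_le_mul_of_nonneg_left h3 hM
    _ ≤ M * (Wc ^ (L' + 1) * ∑ s, (B i s) ^ 2) :=
        mul_le_mul_of_nonneg_left (mul_le_mul_of_nonneg_right hRnorm hBsum) hM
    _ = M * Wc ^ (L' + 1) * ∑ k, ((Ahat ^ (L' + 1) * (U.map (fun x => |x|))) i k) ^ 2 := by
        rw [hB, hUa]; ring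
end

section
/- Fix N, S ≥ 1 and L ≥ 1. Let Â ∈ ℝ^{N×N} have nonnegative entries, let W^{(0)}, …, W^{(L−1)} be real weight matrices of compatible sizes with W^{(0)} having S rows, and let g : ℝ^{d} → ℝ^{T} be an arbitrary function (with d the number of columns of W^{(L−1)}). Define the L-layer GCN f by: H^{(0)} = X ∈ ℝ^{N×S}, H^{(l+1)} = ReLU(Â H^{(l)} W^{(l)}) entrywise for 0 ≤ l ≤ L−2, and f(X)_{i·} = g((Â H^{(L−1)} W^{(L−1)})_{i·}). Let i be a node and let U ∈ ℝ^{N×S} be a perturbation such that for every node h whose row U_{h·} is nonzero one has (Â^L)_{ih} = 0. Then f(X+U)_{i·} = f(X)_{i·}, i.e., the perturbation has no effect on the prediction at node i. -/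
/-- Qualitative content of Proposition 1: for an `L`-layer GCN (here
`L = L' + 1 ≥ 1`) with nonnegative propagation matrix `Â`, if every node `h`
whose perturbation row `U_{h·}` is nonzero satisfies `(Â^L)_{ih} = 0`, then the
perturbation `U` has no effect on the prediction at node `i`. -/
theorem attack_outside_L_hop_no_effect
    (N L' T : ℕ) (hN : 1 ≤ N)
    (L : ℕ) (hLdef : L = L' + 1)
    (dims : ℕ → ℕ) (S : ℕ) (hS : dims 0 = S) (hS1 : 1 ≤ S)
    (Ahat : Matrix (Fin N) (Fin N) ℝ) (hA : ∀ i j, 0 ≤ Ahat i j)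
    (W : (l : ℕ) → Matrix (Fin (dims l)) (Fin (dims (l + 1))) ℝ)
    (g : (Fin (dims (L' + 1)) → ℝ) → (Fin T → ℝ))
    (X U : Matrix (Fin N) (Fin (dims 0)) ℝ)
    (H H' : (l : ℕ) → Matrix (Fin N) (Fin (dims l)) ℝ)
    (hH0 : H 0 = X) (hH'0 : H' 0 = X + U)
    (hHrec : ∀ l, l + 2 ≤ L → H (l + 1) = (Ahat * H l * W l).map relu)
    (hH'rec : ∀ l, l + 2 ≤ L → H' (l + 1) = (Ahat * H' l * W l).map relu)
    (i : Fin N)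
    (hU : ∀ h : Fin N, (∃ k, U h k ≠ 0) → (Ahat ^ L) i h = 0) :
    g ((Ahat * H' L' * W L') i) = g ((Ahat * H L' * W L') i) := by
  subst hLdef
  have hpow : ∀ n a b, 0 ≤ (Ahat ^ n) a b := by
    intro n
    induction n with
    | zero =>
      intro a b
      simp [Matrix.one_apply]
      split_ifs <;> norm_num
    | succ n ih =>
      intro a b
      rw [pow_succ, Matrix.mul_apply]
      exact Finset.sum_nonneg fun c _ => mul_nonneg (ih a c) (hA c b)
  have key : ∀ m, m ≤ L' → ∀ j, (Ahat ^ (L' + 1 - m)) i j ≠ 0 → H' m j = H m j := by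
    intro m
    induction m with
    | zero =>
      intro _ j hj
      have hU0 : ∀ k, U j k = 0 := by
        intro k
        by_contra hk
        exact hj (by simpa using hU j ⟨k, hk⟩)
      rw [hH'0, hH0]
      funext k
      simp [Matrix.add_apply, hU0 k]
    | succ m ih =>
      intro hm j hj
      have hm' : m ≤ L' := Nat.le_of_succ_le hm
      rw [hHrec m (by omega), hH'rec m (by omega)]
      funext k
      simp only [Matrix.map_apply]
      congr 1
      rw [Matrix.mul_apply, Matrix.mul_apply]
      apply Finset.sum_congr rfl
      intro d _
      congr 1
      rw [Matrix.mul_apply, Matrix.mul_apply]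
      apply Finset.sum_congr rfl
      intro h _
      by_cases hAjh : Ahat j h = 0
      · simp [hAjh]
      · have hh : (Ahat ^ (L' + 1 - m)) i h ≠ 0 := by
          have hn : L' + 1 - m = (L' + 1 - (m + 1)) + 1 := by omega
          rw [hn, pow_succ, Matrix.mul_apply]
          intro h0
          have := (Finset.sum_eq_zero_iff_of_nonneg
            (fun c _ => mul_nonneg (hpow _ i c) (hA c h))).mp h0 j (Finset.mem_univ j)
          rcases mul_eq_zero.mp this with h1 | h1
          · exact hj h1
          · exact hAjh h1
        rw [ih hm' h hh]
  have hfin : (Ahat * H' L' * W L') i = (Ahat * H L' * W L') i := by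
    funext k
    rw [Matrix.mul_apply, Matrix.mul_apply]
    apply Finset.sum_congr rfl
    intro d _
    congr 1
    rw [Matrix.mul_apply, Matrix.mul_apply]
    apply Finset.sum_congr rfl
    intro h _
    by_cases hAih : Ahat i h = 0
    · simp [hAih]
    · have : (Ahat ^ (L' + 1 - L')) i h ≠ 0 := by
        have : L' + 1 - L' = 1 := by omega
        rw [this, pow_one]
        exact hAih
      rw [key L' le_rfl h this]
  rw [hfin]
end

section
/- Let G be a simple graph on vertex set {1, …, N} with real adjacency matrix A, let Ã = A + I, let D̃ be the diagonal matrix with D̃_{ii} = (degree of i in G) + 1, and let Â = D̃^{−1/2} Ã D̃^{−1/2}. Fix L ≥ 1, weight matrices W^{(0)}, …, W^{(L−1)} of compatible sizes with W^{(0)} having S rows, and an arbitrary readout g : ℝ^{d} → ℝ^{T}. Define the L-layer GCN f by H^{(0)} = X ∈ ℝ^{N×S}, H^{(l+1)} = ReLU(Â H^{(l)} W^{(l)}) entrywise for 0 ≤ l ≤ L−2, and f(X)_{i·} = g((Â H^{(L−1)} W^{(L−1)})_{i·}). If U ∈ ℝ^{N×S} is a perturbation such that every node h with nonzero row U_{h·}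 admits no walk in G from i to h of length at most L, then f(X+U)_{i·} = f(X)_{i·}. -/
/-- Proposition 1 of the paper, instantiated with the standard normalized
adjacency matrix `Â = D̃^{−1/2} (A + I) D̃^{−1/2}` of a simple graph `G` on
`{1, …, N}` (with `D̃_{ii} = deg(i) + 1`): for an `L`-layer GCN (here
`L = L' + 1 ≥ 1`), if every node `h` with a nonzero perturbation row `U_{h·}`
admits no walk in `G` from `i` to `h` of length at most `L`, then the
perturbation does not change the prediction at node `i`. -/
theorem gcn_attack_outside_L_hop_no_effect
    (N L' T : ℕ) (hN : 1 ≤ N)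
    (L : ℕ) (hLdef : L = L' + 1)
    (G : SimpleGraph (Fin N)) [DecidableRel G.Adj]
    (Ahat : Matrix (Fin N) (Fin N) ℝ)
    (hAhat : Ahat =
      Matrix.diagonal (fun v => (Real.sqrt ((G.degree v : ℝ) + 1))⁻¹)
        * (G.adjMatrix ℝ + 1)
        * Matrix.diagonal (fun v => (Real.sqrt ((G.degree v : ℝ) + 1))⁻¹))
    (dims : ℕ → ℕ) (S : ℕ) (hS : dims 0 = S) (hS1 : 1 ≤ S)
    (W : (l : ℕ) → Matrix (Fin (dims l)) (Fin (dims (l + 1))) ℝ)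
    (g : (Fin (dims (L' + 1)) → ℝ) → (Fin T → ℝ))
    (X U : Matrix (Fin N) (Fin (dims 0)) ℝ)
    (H H' : (l : ℕ) → Matrix (Fin N) (Fin (dims l)) ℝ)
    (hH0 : H 0 = X) (hH'0 : H' 0 = X + U)
    (hHrec : ∀ l, l + 2 ≤ L → H (l + 1) = (Ahat * H l * W l).map relu)
    (hH'rec : ∀ l, l + 2 ≤ L → H' (l + 1) = (Ahat * H' l * W l).map relu)
    (i : Fin N)
    (hU : ∀ h : Fin N, (∃ k, U h k ≠ 0) →
      ¬ ∃ p : G.Walk i h, p.length ≤ L) :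
    g ((Ahat * H' L' * W L') i) = g ((Ahat * H L' * W L') i) := by
  have hAne : ∀ j k : Fin N, Ahat j k ≠ 0 → j = k ∨ G.Adj j k := by
    intro j k h
    by_contra hc
    push_neg at hc
    apply h
    rw [hAhat]
    simp [Matrix.mul_apply, Matrix.diagonal_apply, Matrix.one_apply,
      Finset.sum_ite_eq, hc.1, hc.2]
  have key : ∀ l, l ≤ L' → ∀ j : Fin N,
      (∃ p : G.Walk i j, p.length ≤ L - l) → H' l j = H l j := by
    intro l
    induction l with
    | zero =>
      intro _ j hj
      rw [hH'0, hH0]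
      have hUj : U j = 0 := by
        by_contra hu
        have : ∃ k, U j k ≠ 0 := by
          by_contra hk
          push_neg at hk
          exact hu (funext hk)
        exact hU j this (by simpa using hj)
      funext k
      rw [Matrix.add_apply]
      simp [show U j k = 0 from congrFun hUj k]
    | succ l ih =>
      intro hl j hj
      obtain ⟨p, hp⟩ := hj
      rw [hHrec l (by omega), hH'rec l (by omega)]
      funext k
      simp only [Matrix.map_apply, Matrix.mul_apply]
      congr 1
      apply Finset.sum_congr rfl
      intro m _
      congr 1
      apply Finset.sum_congr rfl
      intro n _
      by_cases hz : Ahat j n = 0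
      · simp [hz]
      · have hrow : H' l n = H l n := by
          apply ih (by omega) n
          rcases hAne j n hz with h | h
          · exact ⟨p.copy rfl h, by rw [SimpleGraph.Walk.length_copy]; omega⟩
          · exact ⟨p.concat h, by rw [SimpleGraph.Walk.length_concat]; omega⟩
        rw [hrow]
  have main : (Ahat * H' L' * W L') i = (Ahat * H L' * W L') i := by
    funext k
    simp only [Matrix.mul_apply]
    apply Finset.sum_congr rfl
    intro m _
    congr 1
    apply Finset.sum_congr rfl
    intro n _
    by_cases hz : Ahat i n = 0
    · simp [hz]
    · have hrow : H' L' n = H L' n := by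
        apply key L' le_rfl n
        rcases hAne i n hz with h | h
        · exact ⟨SimpleGraph.Walk.nil.copy rfl h, by simp⟩
        · exact ⟨SimpleGraph.Walk.nil.concat h, by
            rw [SimpleGraph.Walk.length_concat]; simp; omega⟩
      rw [hrow]
  rw [main]
end
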